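/- Let B → K and C → K be ring homomorphisms with C → K surjective, A = B ×_K C, and let I = Ker(A → B) be the conductor. For any element f ∈ I, the localization homomorphism A_f → C_f (induced by the projection A → C) is an isomorphism. -/

import Mathlib

/-- For `f` in the conductor `I = Ker(A → B)`, the induced map of
localizations `A_f → C_f` is an isomorphism. -/
theorem ferrand_conductor_localization_iso
    (A B C K : Type*) [CommRing A] [CommRing B] [CommRing C] [CommRing K]
    [Algebra A B] [Algebra A C] [Algebra A K] [Algebra B K] [Algebra C K]
    [IsScalarTower A B K] [IsScalarTower A C K]
    (hsurj : Function.Surjective (algebraMap C K))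
    (hpull : ∀ (b : B) (c : C), algebraMap B K b = algebraMap C K c →
      ∃! a : A, algebraMap A B a = b ∧ algebraMap A C a = c)
    (f : A) (hf : f ∈ RingHom.ker (algebraMap A B)) :
    Function.Bijective (Localization.awayMap (algebraMap A C) f) := by
  set φ := algebraMap A C
  have hfB : algebraMap A B f = 0 := hf
  -- key uniqueness: if both images are 0, the element is 0
  have hzero : ∀ x : A, algebraMap A B x = 0 → φ x = 0 → x = 0 := by
    intro x hb hc
    obtain ⟨a, -, ha⟩ := hpull 0 0 (by simp)
    exact (ha x ⟨hb, hc⟩).trans (ha 0 ⟨map_zero _, map_zero _⟩).symm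
  -- key surjectivity: every c multiplied by φ f lifts
  have hlift : ∀ c : C, ∃ a : A, algebraMap A B a = 0 ∧ φ a = c * φ f := by
    intro c
    have : algebraMap B K (0 : B) = algebraMap C K (c * φ f) := by
      have : algebraMap C K (φ f) = 0 := by
        rw [← IsScalarTower.algebraMap_apply, IsScalarTower.algebraMap_apply A B K, hfB,
          map_zero]
      simp [this]
    obtain ⟨a, ha, -⟩ := hpull 0 (c * φ f) this
    exact ⟨a, ha⟩
  constructor
  · intro x y hxy
    obtain ⟨⟨a, ⟨_, n, rfl⟩⟩, rfl⟩ := IsLocalization.mk'_surjective (Submonoid.powers f) x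
    obtain ⟨⟨b, ⟨_, m, rfl⟩⟩, rfl⟩ := IsLocalization.mk'_surjective (Submonoid.powers f) y
    rw [Localization.awayMap, IsLocalization.Away.map, IsLocalization.map_mk',
      IsLocalization.map_mk'] at hxy
    rw [IsLocalization.mk'_eq_iff_eq] at hxy ⊢
    obtain ⟨⟨_, k, rfl⟩, hk⟩ := (IsLocalization.eq_iff_exists (Submonoid.powers (φ f)) _).mp hxy
    refine (IsLocalization.eq_iff_exists (Submonoid.powers f) _).mpr
      ⟨⟨f ^ (k + 1), k + 1, rfl⟩, ?_⟩
    simp only [map_mul, map_pow] at hk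
    have hC : φ (f ^ (k + 1) * (f ^ m * a) - f ^ (k + 1) * (f ^ n * b)) = 0 := by
      simp only [map_sub, map_mul, map_pow, pow_succ]
      linear_combination φ f * hk
    have hB : algebraMap A B (f ^ (k + 1) * (f ^ m * a) - f ^ (k + 1) * (f ^ n * b)) = 0 := by
      simp [map_pow, hfB, pow_succ]
    have := sub_eq_zero.mp (hzero _ hB hC)
    simpa using this
  · intro y
    obtain ⟨⟨c, ⟨_, n, rfl⟩⟩, rfl⟩ := IsLocalization.mk'_surjective (Submonoid.powers (φ f)) y
    obtain ⟨a, -, ha⟩ := hlift c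
    refine ⟨IsLocalization.mk' (Localization.Away f) a
      (⟨f ^ (n + 1), n + 1, rfl⟩ : Submonoid.powers f), ?_⟩
    rw [Localization.awayMap, IsLocalization.Away.map, IsLocalization.map_mk']
    rw [IsLocalization.mk'_eq_iff_eq]
    refine (IsLocalization.eq_iff_exists (Submonoid.powers (φ f)) _).mpr ⟨1, ?_⟩
    simp only [map_pow, one_mul]
    rw [ha, pow_succ]
    ring
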